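/- Let R be a ring and C a class of Gorenstein projective R-modules which is Ω^{-1}-closed (every C ∈ C embeds in a projective with cokernel in C). If Tor_i^R(I, C) = 0 for all C ∈ C, all injective right R-modules I, and all i > 0, then every module in C is PGF. -/

import Mathlib

universe u v

open Function

section NCTensor

variable (S : Type u) [Ring S]

/-- The balancing relations for the tensor product `I ⊗_S M` of a right `S`-module `I`
with a left `S`-module `M`, inside `I ⊗_ℤ M`. -/
def ncRel (I : Type u) [AddCommGroup I] [Module Sᵐᵒᵖ I]
    (M : Type u) [AddCommGroup M] [Module S M] : Submodule ℤ (TensorProduct ℤ I M) :=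
  Submodule.span ℤ {z | ∃ (x : I) (s : S) (m : M),
    z = (MulOpposite.op s • x) ⊗ₜ[ℤ] m - x ⊗ₜ[ℤ] (s • m)}

/-- The tensor product `I ⊗_S M` of a right `S`-module `I` with a left `S`-module `M`
(as an abelian group). -/
def NCT (I : Type u) [AddCommGroup I] [Module Sᵐᵒᵖ I]
    (M : Type u) [AddCommGroup M] [Module S M] : Type u :=
  TensorProduct ℤ I M ⧸ ncRel S I M

noncomputable instance (I : Type u) [AddCommGroup I] [Module Sᵐᵒᵖ I]
    (M : Type u) [AddCommGroup M] [Module S M] : AddCommGroup (NCT S I M) :=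
  inferInstanceAs (AddCommGroup (TensorProduct ℤ I M ⧸ ncRel S I M))

/-- The map `I ⊗_S M → I ⊗_S N` induced by an `S`-linear map `f : M → N`. -/
noncomputable def nctMap (I : Type u) [AddCommGroup I] [Module Sᵐᵒᵖ I]
    {M N : Type u} [AddCommGroup M] [Module S M] [AddCommGroup N] [Module S N]
    (f : M →ₗ[S] N) : NCT S I M →ₗ[ℤ] NCT S I N :=
  Submodule.mapQ _ _ (LinearMap.lTensor I f.toAddMonoidHom.toIntLinearMap) (by
    apply Submodule.span_le.2
    rintro z ⟨x, s, m, rfl⟩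
    have hmem : (LinearMap.lTensor I f.toAddMonoidHom.toIntLinearMap)
        ((MulOpposite.op s • x) ⊗ₜ[ℤ] m - x ⊗ₜ[ℤ] (s • m)) ∈ ncRel S I N := by
      rw [map_sub, LinearMap.lTensor_tmul, LinearMap.lTensor_tmul]
      have h2 : f.toAddMonoidHom.toIntLinearMap (s • m) = s • f m := f.map_smul s m
      rw [h2]
      exact Submodule.subset_span ⟨x, s, f m, rfl⟩
    exact hmem)

end NCTensor

section Complexes

variable (S : Type u) [Ring S]

/-- A `ℤ`-indexed sequence of `S`-modules with maps `X (n+1) → X n`. -/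
structure ZComplex where
  X : ℤ → Type u
  [addX : ∀ n, AddCommGroup (X n)]
  [modX : ∀ n, Module S (X n)]
  d : ∀ n : ℤ, X (n + 1) →ₗ[S] X n

attribute [instance] ZComplex.addX ZComplex.modX

/-- `M` is a projectively coresolved Gorenstein flat (PGF) `S`-module: a syzygy of an acyclic
complex of projective `S`-modules which remains acyclic after tensoring with every injective
right `S`-module. -/
def IsPGF (M : Type u) [AddCommGroup M] [Module S M] : Prop :=
  ∃ P : ZComplex S,
    (∀ n, Module.Projective S (P.X n)) ∧
    (∀ n, Function.Exact (P.d (n + 1)) (P.d n)) ∧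
    (∀ (I : Type u) [AddCommGroup I] [Module Sᵐᵒᵖ I], Module.Injective Sᵐᵒᵖ I →
      ∀ n, Function.Exact (nctMap S I (P.d (n + 1))) (nctMap S I (P.d n))) ∧
    Nonempty ((LinearMap.range (P.d 0)) ≃ₗ[S] M)

/-- `M` is a Gorenstein projective `S`-module: a syzygy of an acyclic complex of projective
`S`-modules which stays acyclic under `Hom_S(-, Q)` for every projective `S`-module `Q`. -/
def IsGorensteinProjective (M : Type u) [AddCommGroup M] [Module S M] : Prop :=
  ∃ P : ZComplex S,
    (∀ n, Module.Projective S (P.X n)) ∧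
    (∀ n, Function.Exact (P.d (n + 1)) (P.d n)) ∧
    (∀ (Q : Type u) [AddCommGroup Q] [Module S Q], Module.Projective S Q →
      ∀ n, Function.Exact (fun φ : P.X n →ₗ[S] Q => φ.comp (P.d n))
        (fun ψ : P.X (n + 1) →ₗ[S] Q => ψ.comp (P.d (n + 1)))) ∧
    Nonempty ((LinearMap.range (P.d 0)) ≃ₗ[S] M)

/-- A (left) resolution of the `S`-module `M`. -/
structure NatRes (M : Type u) [AddCommGroup M] [Module S M] where
  F : ℕ → Type u
  [addF : ∀ n, AddCommGroup (F n)]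
  [modF : ∀ n, Module S (F n)]
  d : ∀ n : ℕ, F (n + 1) →ₗ[S] F n
  aug : F 0 →ₗ[S] M
  surj : Function.Surjective aug
  exact0 : Function.Exact (d 0) aug
  exact : ∀ n, Function.Exact (d (n + 1)) (d n)

attribute [instance] NatRes.addF NatRes.modF

/-- A class of `S`-modules. -/
def ModClass : Type (u + 1) :=
  ∀ (N : Type u) [AddCommGroup N] [Module S N], Prop

/-- `M` admits a resolution of length at most `n` by modules in the class `C`. -/
def HasResLen (C : ModClass S) (M : Type u) [AddCommGroup M] [Module S M] (n : ℕ) : Prop :=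
  ∃ ρ : NatRes S M, (∀ i, C (ρ.F i)) ∧ ∀ i, n < i → ∀ x : ρ.F i, x = 0

/-- The resolution dimension of `M` with respect to the class `C`, as an element of `ℕ∞`. -/
noncomputable def classDim (C : ModClass S) (M : Type u) [AddCommGroup M] [Module S M] : ℕ∞ :=
  sInf {e : ℕ∞ | ∃ n : ℕ, e = n ∧ HasResLen S C M n}

/-- The class of projective `S`-modules. -/
def projClass : ModClass S := fun N _ _ => Module.Projective S N

/-- The class of PGF `S`-modules. -/
def pgfClass : ModClass S := fun N _ _ => IsPGF S N

/-- The projective dimension of `M` as an element of `ℕ∞`. -/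
noncomputable def projDim (M : Type u) [AddCommGroup M] [Module S M] : ℕ∞ :=
  classDim S (projClass S) M

/-- The PGF dimension of `M` as an element of `ℕ∞`. -/
noncomputable def pgfDim (M : Type u) [AddCommGroup M] [Module S M] : ℕ∞ :=
  classDim S (pgfClass S) M

/-- A bundled injective `S`-module. -/
structure InjMod where
  carrier : Type u
  [addC : AddCommGroup carrier]
  [modC : Module S carrier]
  inj : Module.Injective S carrier

attribute [instance] InjMod.addC InjMod.modC

/-- `spli S`: the supremum of the projective dimensions of injective `S`-modules. -/
noncomputable def spli : ℕ∞ :=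
  sSup (Set.range fun I : InjMod S => projDim S I.carrier)

end Complexes

section Sfli

variable (R : Type u) [CommRing R]

/-- The class of flat `R`-modules. -/
def flatClass : ModClass R := fun N _ _ => Module.Flat R N

/-- The flat dimension of `M` as an element of `ℕ∞`. -/
noncomputable def flatDim (M : Type u) [AddCommGroup M] [Module R M] : ℕ∞ :=
  classDim R (flatClass R) M

/-- `sfli R`: the supremum of the flat dimensions of injective `R`-modules. -/
noncomputable def sfli : ℕ∞ :=
  sSup (Set.range fun I : InjMod R => flatDim R I.carrier)

end Sfli

section Trivial

variable (R : Type u) [CommRing R] (G : Type u) [Group G]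

/-- The augmentation `R`-algebra map `R[G] → R`. -/
noncomputable def augmentation : MonoidAlgebra R G →ₐ[R] R :=
  MonoidAlgebra.lift R R G 1

end Trivial

/-- The trivial `R[G]`-module `R`. -/
def Triv (R : Type u) (G : Type u) : Type u := R

section Trivial2

variable (R : Type u) [CommRing R] (G : Type u) [Group G]

instance : AddCommGroup (Triv R G) := inferInstanceAs (AddCommGroup R)

instance : Module R (Triv R G) := inferInstanceAs (Module R R)

noncomputable instance : Module (MonoidAlgebra R G) (Triv R G) :=
  Module.compHom R (augmentation R G).toRingHom

instance : IsScalarTower R (MonoidAlgebra R G) (Triv R G) :=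
  ⟨fun r x m => by
    show (augmentation R G) (r • x) • m = r • ((augmentation R G) x • m)
    rw [map_smul]
    exact mul_smul r ((augmentation R G) x) m⟩

/-- The PGF dimension of the group `G` over `R`: the PGF dimension of the trivial
`R[G]`-module `R`. -/
noncomputable def pgfGroupDim : ℕ∞ :=
  pgfDim (MonoidAlgebra R G) (Triv R G)

end Trivial2


/-- A witness of `Ω⁻¹`-closedness at a module `N`: a short exact sequence
`0 → N → P → D → 0` with `P` projective and `D` in the class `C`. -/
structure OmegaWitness (S : Type u) [Ring S] (C : ModClass S)
    (N : Type u) [AddCommGroup N] [Module S N] where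
  P : Type u
  [addP : AddCommGroup P]
  [modP : Module S P]
  projP : Module.Projective S P
  D : Type u
  [addD : AddCommGroup D]
  [modD : Module S D]
  memD : C D
  i : N →ₗ[S] P
  p : P →ₗ[S] D
  inj : Function.Injective i
  surj : Function.Surjective p
  exact : Function.Exact i p

attribute [instance] OmegaWitness.addP OmegaWitness.modP OmegaWitness.addD OmegaWitness.modD


section AuxPGF

variable {S : Type u} [Ring S]

theorem auxExactInjComp {A B C C' : Type u}
    [AddCommGroup A] [Module S A] [AddCommGroup B] [Module S B]
    [AddCommGroup C] [Module S C] [AddCommGroup C'] [Module S C']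
    (g : A →ₗ[S] B) (p : B →ₗ[S] C) (j : C →ₗ[S] C')
    (hj : Function.Injective j) (h : Function.Exact g p) :
    Function.Exact g (j ∘ₗ p) := by
  rw [LinearMap.exact_iff] at h ⊢
  rw [LinearMap.ker_comp, LinearMap.ker_eq_bot.2 hj]
  exact h

theorem auxExactCompSurj {A' A B C : Type u}
    [AddCommGroup A'] [Module S A'] [AddCommGroup A] [Module S A]
    [AddCommGroup B] [Module S B] [AddCommGroup C] [Module S C]
    (f : A' →ₗ[S] A) (i : A →ₗ[S] B) (p : B →ₗ[S] C)
    (hf : Function.Surjective f) (h : Function.Exact i p) :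
    Function.Exact (i ∘ₗ f) p := by
  rw [LinearMap.exact_iff] at h ⊢
  rw [LinearMap.range_comp_of_range_eq_top i (LinearMap.range_eq_top.2 hf)]
  exact h

theorem auxExactComp {A' A B C C' : Type u}
    [AddCommGroup A'] [Module S A'] [AddCommGroup A] [Module S A]
    [AddCommGroup B] [Module S B] [AddCommGroup C] [Module S C]
    [AddCommGroup C'] [Module S C']
    (f : A' →ₗ[S] A) (i : A →ₗ[S] B) (p : B →ₗ[S] C) (j : C →ₗ[S] C')
    (hf : Function.Surjective f) (hj : Function.Injective j)
    (h : Function.Exact i p) : Function.Exact (i ∘ₗ f) (j ∘ₗ p) :=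
  auxExactCompSurj f i (j ∘ₗ p) hf (auxExactInjComp i p j hj h)

/-- Extract a projective `NatRes` resolution from a Gorenstein projective module. -/
theorem exists_projNatRes {N : Type u} [AddCommGroup N] [Module S N]
    (h : IsGorensteinProjective S N) :
    ∃ ρ : NatRes S N, ∀ i, Module.Projective S (ρ.F i) := by
  obtain ⟨Q, hproj, hexact, -, ⟨e⟩⟩ := h
  refine ⟨{ F := fun i => Q.X ((i : ℤ) + 1)
            d := fun i => by exact Q.d ((i : ℤ) + 1)
            aug := e.toLinearMap ∘ₗ (Q.d 0).rangeRestrict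
            surj := e.surjective.comp (Q.d 0).surjective_rangeRestrict
            exact0 := ?_
            exact := fun n => by exact hexact ((n : ℤ) + 1) }, fun i => hproj _⟩
  rw [LinearMap.exact_iff, LinearMap.ker_comp, LinearEquiv.ker]
  show LinearMap.ker ((Q.d 0).rangeRestrict) = _
  rw [LinearMap.ker_rangeRestrict]
  exact LinearMap.exact_iff.1 (hexact 0)

/-- A bundled module in the class `C`. -/
structure CModAux (S : Type u) [Ring S] (C : ModClass S) where
  M : Type u
  [addM : AddCommGroup M]
  [modM : Module S M]
  mem : C M

attribute [instance] CModAux.addM CModAux.modM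

variable {C : ModClass S}
variable (homega : ∀ (N : Type u) [AddCommGroup N] [Module S N], C N →
      Nonempty (OmegaWitness S C N))

/-- The chain of cosyzygies obtained by iterating `Ω⁻¹`-closedness. -/
noncomputable def chainAux (Z : CModAux S C) : ℕ → CModAux S C := fun k =>
  Nat.rec Z (fun _ c => CModAux.mk (S := S) (M := ((homega c.M c.mem).some).D)
    ((homega c.M c.mem).some).memD) k

/-- The omega witness at step `k` of the chain. -/
noncomputable def witAux (Z : CModAux S C) (k : ℕ) :
    OmegaWitness S C (chainAux homega Z k).M :=
  (homega _ (chainAux homega Z k).mem).some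

section Splice

variable {M : Type u} [AddCommGroup M] [Module S M]
variable (w : OmegaWitness S C M) (r : NatRes S M)

/-- Terms of the spliced resolution. -/
def spliceF : ℕ → Type u := fun n => Nat.casesOn n w.P r.F

instance spliceFAdd : ∀ n, AddCommGroup (spliceF (S := S) w r n)
  | 0 => inferInstanceAs (AddCommGroup w.P)
  | (i+1) => inferInstanceAs (AddCommGroup (r.F i))

instance spliceFMod : ∀ n, Module S (spliceF (S := S) w r n)
  | 0 => inferInstanceAs (Module S w.P)
  | (i+1) => inferInstanceAs (Module S (r.F i))

/-- Differentials of the spliced resolution. -/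
noncomputable def spliceD : ∀ n, spliceF (S := S) w r (n+1) →ₗ[S] spliceF (S := S) w r n
  | 0 => w.i ∘ₗ r.aug
  | (i+1) => r.d i

/-- Splicing a resolution of `M` with a short exact sequence `0 → M → P → D → 0`
produces a resolution of `D`. -/
noncomputable def spliceRes : NatRes S w.D where
  F := spliceF (S := S) w r
  addF := spliceFAdd w r
  modF := spliceFMod w r
  d := spliceD w r
  aug := w.p
  surj := w.surj
  exact0 := auxExactCompSurj r.aug w.i w.p r.surj w.exact
  exact := fun n => by
    cases n with
    | zero => exact auxExactInjComp (r.d 0) r.aug w.i w.inj r.exact0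
    | succ i => exact r.exact i

end Splice

/-- The chain of spliced resolutions of the cosyzygy modules. -/
noncomputable def resAux (Z : CModAux S C) (ρ₀ : NatRes S Z.M) :
    ∀ k : ℕ, NatRes S (chainAux homega Z k).M := fun k =>
  Nat.rec ρ₀ (fun k r => spliceRes (witAux homega Z k) r) k

theorem resAux_proj (Z : CModAux S C) (ρ₀ : NatRes S Z.M)
    (hproj0 : ∀ i, Module.Projective S (ρ₀.F i)) :
    ∀ k i, Module.Projective S ((resAux homega Z ρ₀ k).F i) := by
  intro k
  induction k with
  | zero => exact hproj0
  | succ k ih =>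
    intro i
    cases i with
    | zero => exact (witAux homega Z k).projP
    | succ i => exact ih i

section Big

variable (Z : CModAux S C) (ρ₀ : NatRes S Z.M)

/-- The modules of the complete acyclic complex. -/
noncomputable def bigX : ℤ → Type u
  | .ofNat 0 => (witAux homega Z 0).P
  | .ofNat (k+1) => ρ₀.F k
  | .negSucc k => (witAux homega Z (k+1)).P

noncomputable instance bigXAdd : ∀ n, AddCommGroup (bigX homega Z ρ₀ n)
  | .ofNat 0 => inferInstanceAs (AddCommGroup (witAux homega Z 0).P)
  | .ofNat (k+1) => inferInstanceAs (AddCommGroup (ρ₀.F k))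
  | .negSucc k => inferInstanceAs (AddCommGroup (witAux homega Z (k+1)).P)

noncomputable instance bigXMod : ∀ n, Module S (bigX homega Z ρ₀ n)
  | .ofNat 0 => inferInstanceAs (Module S (witAux homega Z 0).P)
  | .ofNat (k+1) => inferInstanceAs (Module S (ρ₀.F k))
  | .negSucc k => inferInstanceAs (Module S (witAux homega Z (k+1)).P)

/-- The differentials of the complete acyclic complex. -/
noncomputable def bigD : ∀ n : ℤ, bigX homega Z ρ₀ (n+1) →ₗ[S] bigX homega Z ρ₀ n
  | .ofNat 0 => (witAux homega Z 0).i ∘ₗ ρ₀.aug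
  | .ofNat (k+1) => ρ₀.d k
  | .negSucc 0 => (witAux homega Z 1).i ∘ₗ (witAux homega Z 0).p
  | .negSucc (k+1) => (witAux homega Z (k+2)).i ∘ₗ (witAux homega Z (k+1)).p

end Big

end AuxPGF

/-- Let `C` be an `Ω⁻¹`-closed class of Gorenstein projective `S`-modules
such that `Tor_i(I, C) = 0` for every injective right `S`-module `I`, every `C ∈ C` and every
`i > 0` (expressed here by: every projective resolution of a module in `C` stays exact in
positive degrees after tensoring with `I`). Then every module in `C` is PGF. -/
theorem omegaClosed_torVanishing_isPGF (S : Type u) [Ring S] (C : ModClass S)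
    (hGP : ∀ (N : Type u) [AddCommGroup N] [Module S N], C N → IsGorensteinProjective S N)
    (homega : ∀ (N : Type u) [AddCommGroup N] [Module S N], C N →
      Nonempty (OmegaWitness S C N))
    (htor : ∀ (N : Type u) [AddCommGroup N] [Module S N], C N →
      ∀ (I : Type u) [AddCommGroup I] [Module Sᵐᵒᵖ I], Module.Injective Sᵐᵒᵖ I →
      ∀ (ρ : NatRes S N), (∀ i, Module.Projective S (ρ.F i)) →
      ∀ n, Function.Exact (nctMap S I (ρ.d (n + 1))) (nctMap S I (ρ.d n))) :
    ∀ (N : Type u) [AddCommGroup N] [Module S N], C N → IsPGF S N := by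
  intro N instA instM hN
  obtain ⟨ρ₀, hρ₀⟩ := exists_projNatRes (hGP N hN)
  refine ⟨{ X := bigX homega (CModAux.mk N hN) ρ₀
            addX := bigXAdd homega (CModAux.mk N hN) ρ₀
            modX := bigXMod homega (CModAux.mk N hN) ρ₀
            d := bigD homega (CModAux.mk N hN) ρ₀ }, ?_, ?_, ?_, ?_⟩
  · intro n
    cases n with
    | ofNat k =>
      cases k with
      | zero => exact (witAux homega (CModAux.mk N hN) 0).projP
      | succ k => exact hρ₀ k
    | negSucc k => exact (witAux homega (CModAux.mk N hN) (k+1)).projP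
  · intro n
    cases n with
    | ofNat k =>
      cases k with
      | zero =>
        exact auxExactInjComp (ρ₀.d 0) ρ₀.aug (witAux homega (CModAux.mk N hN) 0).i
          (witAux homega (CModAux.mk N hN) 0).inj ρ₀.exact0
      | succ k => exact ρ₀.exact k
    | negSucc k =>
      cases k with
      | zero =>
        exact auxExactComp ρ₀.aug (witAux homega (CModAux.mk N hN) 0).i
          (witAux homega (CModAux.mk N hN) 0).p (witAux homega (CModAux.mk N hN) 1).i
          ρ₀.surj (witAux homega (CModAux.mk N hN) 1).inj
          (witAux homega (CModAux.mk N hN) 0).exact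
      | succ j =>
        cases j with
        | zero =>
          exact auxExactComp (witAux homega (CModAux.mk N hN) 0).p
            (witAux homega (CModAux.mk N hN) 1).i (witAux homega (CModAux.mk N hN) 1).p
            (witAux homega (CModAux.mk N hN) 2).i (witAux homega (CModAux.mk N hN) 0).surj
            (witAux homega (CModAux.mk N hN) 2).inj (witAux homega (CModAux.mk N hN) 1).exact
        | succ i =>
          exact auxExactComp (witAux homega (CModAux.mk N hN) (i+1)).p
            (witAux homega (CModAux.mk N hN) (i+2)).i (witAux homega (CModAux.mk N hN) (i+2)).p
            (witAux homega (CModAux.mk N hN) (i+3)).i (witAux homega (CModAux.mk N hN) (i+1)).surj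
            (witAux homega (CModAux.mk N hN) (i+3)).inj (witAux homega (CModAux.mk N hN) (i+2)).exact
  · intro I instI1 instI2 hI n
    cases n with
    | ofNat k =>
      cases k with
      | zero =>
        exact htor (chainAux homega (CModAux.mk N hN) 1).M
          (chainAux homega (CModAux.mk N hN) 1).mem I hI
          (resAux homega (CModAux.mk N hN) ρ₀ 1)
          (resAux_proj homega (CModAux.mk N hN) ρ₀ hρ₀ 1) 0
      | succ k => exact htor N hN I hI ρ₀ hρ₀ k
    | negSucc k =>
      cases k with
      | zero =>
        exact htor (chainAux homega (CModAux.mk N hN) 2).M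
          (chainAux homega (CModAux.mk N hN) 2).mem I hI
          (resAux homega (CModAux.mk N hN) ρ₀ 2)
          (resAux_proj homega (CModAux.mk N hN) ρ₀ hρ₀ 2) 0
      | succ j =>
        cases j with
        | zero =>
          exact htor (chainAux homega (CModAux.mk N hN) 3).M
            (chainAux homega (CModAux.mk N hN) 3).mem I hI
            (resAux homega (CModAux.mk N hN) ρ₀ 3)
            (resAux_proj homega (CModAux.mk N hN) ρ₀ hρ₀ 3) 0
        | succ i =>
          exact htor (chainAux homega (CModAux.mk N hN) (i+4)).M
            (chainAux homega (CModAux.mk N hN) (i+4)).mem I hI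
            (resAux homega (CModAux.mk N hN) ρ₀ (i+4))
            (resAux_proj homega (CModAux.mk N hN) ρ₀ hρ₀ (i+4)) 0
  · have h : LinearMap.range (bigD homega (CModAux.mk N hN) ρ₀ 0)
        = LinearMap.range (witAux homega (CModAux.mk N hN) 0).i := by
      show LinearMap.range ((witAux homega (CModAux.mk N hN) 0).i ∘ₗ ρ₀.aug) = _
      exact LinearMap.range_comp_of_range_eq_top _ (LinearMap.range_eq_top.2 ρ₀.surj)
    exact ⟨(LinearEquiv.ofEq (LinearMap.range (bigD homega (CModAux.mk N hN) ρ₀ 0)) (LinearMap.range (witAux homega (CModAux.mk N hN) 0).i) h).trans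
      (LinearEquiv.ofInjective (witAux homega (CModAux.mk N hN) 0).i (witAux homega (CModAux.mk N hN) 0).inj).symm⟩
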